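/- Let S(p,q) = ⟨c₁⟩⟨−c₂⟩⋯⟨c_k⟩ be the Riley sign sequence of a two-bridge fraction (p,q): εᵢ = sign of the representative of iq modulo 2p chosen in (−p,p), for 1 ≤ i ≤ p−1, grouped into maximal runs of length cⱼ with alternating sign. Then for p = 10s+7 and q = 4s+3 with s ≥ 1, the sign sequence is ⟨2⟩⟨−2⟩(⟨3⟩⟨−2⟩)^{2s}⟨2⟩; equivalently, writing ε as a list, ε₁ = ε₂ = 1, followed by 2s repetitions of the pattern (−1,−1,1,1,1,−1,−1) suitably merged, ending in (1,1), and in particular the total sum of run lengths Σcᵢ equals p − 1 = 10s+6. -/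

import Mathlib

/-- The Riley sign of the `i`-th letter for the two-bridge fraction `(p,q)`:
take the representative `r'` of `i*q` modulo `2p` in the interval `(-p, p)`,
and record its sign. -/
def eps (p q i : ℕ) : ℤ :=
  let r : ℤ := (i * q : ℤ) % (2 * p)
  let r' : ℤ := if r < p then r else r - 2 * p
  if 0 < r' then 1 else -1

theorem eps_eq (s i : ℕ) (h1 : 1 ≤ i) (h2 : i ≤ 10*s+6) :
    eps (10*s+7) (4*s+3) i = if i % 5 ≤ 2 then 1 else -1 := by
  obtain ⟨m, t, ht5, rfl⟩ : ∃ m t, t < 5 ∧ i = 5*m+t :=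
    ⟨i/5, i%5, Nat.mod_lt _ (by norm_num), by omega⟩
  have hm : m ≤ 2*s+1 := by omega
  have key : (((5*m+t) * (4*s+3) : ℕ) : ℤ) % (2 * ((10*s+7 : ℕ):ℤ)) = (m : ℤ) + t * (4*(s:ℤ)+3) := by
    have e1 : (((5*m+t) * (4*s+3) : ℕ) : ℤ)
        = ((m:ℤ) + (t:ℤ)*(4*(s:ℤ)+3)) + (m:ℤ) * (2 * ((10*s+7:ℕ):ℤ)) := by
      push_cast; ring
    rw [e1, Int.add_mul_emod_self_right]
    apply Int.emod_eq_of_lt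
    · positivity
    · have h4 : (t:ℤ) ≤ 4 := by exact_mod_cast Nat.lt_succ_iff.mp ht5
      have hm' : (m:ℤ) ≤ 2*s+1 := by exact_mod_cast hm
      have : (t:ℤ)*(4*(s:ℤ)+3) ≤ 4*(4*(s:ℤ)+3) := by
        apply mul_le_mul_of_nonneg_right h4; positivity
      push_cast; linarith
  simp only [eps]
  rw [show ((5*m+t : ℕ) * ((4*s+3:ℕ)) : ℤ) = (((5*m+t) * (4*s+3) : ℕ) : ℤ) by push_cast; ring] at *
  rw [key]
  have ht : (5*m+t) % 5 = t := by omega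
  rw [ht]
  interval_cases t <;> push_cast <;> split_ifs <;> first | rfl | omega

theorem flat_get (k j : ℕ) (h : j < 5*k) :
    ((List.replicate k ([1,1,1,-1,-1] : List ℤ)).flatten)[j]? =
      some (if j % 5 ≤ 2 then 1 else -1) := by
  induction k generalizing j with
  | zero => omega
  | succ k ih =>
    rw [List.replicate_succ, List.flatten_cons]
    by_cases hj : j < 5
    · rw [List.getElem?_append_left (by simpa using hj)]
      interval_cases j <;> rfl
    · rw [List.getElem?_append_right (by simpa using hj)]
      have h5 : (j - 5) % 5 = j % 5 := by omega
      have := ih (j-5) (by omega)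
      simpa [h5] using this

theorem sign_sequence_Kl (s : ℕ) (hs : 1 ≤ s) :
    (List.ofFn (fun i : Fin (10 * s + 6) => eps (10 * s + 7) (4 * s + 3) (i.val + 1))) =
      ([1, 1, -1, -1] : List ℤ) ++
        (List.replicate (2 * s) ([1, 1, 1, -1, -1] : List ℤ)).flatten ++ [1, 1] := by
  have hflen : ((List.replicate (2 * s) ([1,1,1,-1,-1] : List ℤ)).flatten).length = 10*s := by
    simp [List.length_flatten, List.map_replicate, List.sum_replicate]
    ring
  apply List.ext_getElem?
  intro j
  rw [List.getElem?_ofFn]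
  by_cases hj : j < 10*s+6
  · rw [dif_pos hj]
    have heps := eps_eq s (j+1) (by omega) (by omega)
    simp only [heps]
    by_cases hj4 : j < 4
    · rw [List.getElem?_append_left (by simp [hflen]; omega),
        List.getElem?_append_left (by simp; omega)]
      interval_cases j <;> rfl
    · by_cases hjm : j < 10*s+4
      · rw [List.getElem?_append_left (by simp [hflen]; omega),
          List.getElem?_append_right (by simp; omega)]
        have := flat_get (2*s) (j-4) (by omega)
        simp only [List.length_cons, List.length_nil] at this ⊢
        rw [show j - 4 = j - (0+1+1+1+1) by omega] at this ⊢
        rw [this]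
        congr 1
        have : (j - 4) % 5 = (j+1) % 5 := by omega
        rw [this]
      · rw [List.getElem?_append_right (by simp [hflen]; omega)]
        have h1 : (j+1) % 5 ≤ 2 := by omega
        rw [if_pos h1]
        have : j - (([1, 1, -1, -1] : List ℤ) ++
            (List.replicate (2 * s) ([1,1,1,-1,-1] : List ℤ)).flatten).length = j - (10*s+4) := by
          simp [hflen]
        rw [this]
        have : j - (10*s+4) = 0 ∨ j - (10*s+4) = 1 := by omega
        rcases this with h | h <;> rw [h] <;> rfl
  · rw [dif_neg hj]
    symm
    apply List.getElem?_eq_none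
    simp [hflen]; omega
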